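/- Let N ≥ 2 be an integer, let G be a symmetric N×N real matrix with operator norm ‖G − I‖ ≤ ε for some 0 ≤ ε < 1, where I is the identity. Let e_1, …, e_{N−1}, η be an orthonormal basis of ℝ^N (with respect to the Euclidean inner product ⟨·,·⟩), and suppose v ∈ ℝ^N satisfies ⟨G v, e_i⟩ = 0 for i = 1, …, N−1 and ⟨G v, v⟩ = 1. Then (1 − (N−1)ε²)/(1 + ε) ≤ ⟨v, η⟩² ≤ 1/(1 − ε). -/

import Mathlib

open scoped RealInnerProductSpace

/-- Quantitative comparison of the `G`-unit normal with the Euclidean unit normal: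
if `G` is a symmetric matrix with `‖G − I‖ ≤ ε < 1`, `e_1, …, e_{N−1}, η` is an
orthonormal basis of `ℝ^N`, and `v` satisfies `⟨Gv, e_i⟩ = 0` for `i = 1, …, N−1`
and `⟨Gv, v⟩ = 1`, then `(1 − (N−1)ε²)/(1 + ε) ≤ ⟨v, η⟩² ≤ 1/(1 − ε)`. -/
theorem normal_comparison (N : ℕ) (hN : 2 ≤ N) (ε : ℝ) (hε0 : 0 ≤ ε) (hε1 : ε < 1)
    (G : EuclideanSpace ℝ (Fin N) →L[ℝ] EuclideanSpace ℝ (Fin N))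
    (hGsymm : ∀ x y : EuclideanSpace ℝ (Fin N), ⟪G x, y⟫ = ⟪x, G y⟫)
    (hGnorm : ‖G - ContinuousLinearMap.id ℝ (EuclideanSpace ℝ (Fin N))‖ ≤ ε)
    (b : Fin N → EuclideanSpace ℝ (Fin N)) (hb : Orthonormal ℝ b)
    (v : EuclideanSpace ℝ (Fin N))
    (hv1 : ∀ i : Fin N, (i : ℕ) < N - 1 → ⟪G v, b i⟫ = 0)
    (hv2 : ⟪G v, v⟫ = 1) :
    (1 - ((N : ℝ) - 1) * ε ^ 2) / (1 + ε) ≤ ⟪v, b ⟨N - 1, by omega⟩⟫ ^ 2 ∧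
      ⟪v, b ⟨N - 1, by omega⟩⟫ ^ 2 ≤ 1 / (1 - ε) := by
  set A := G - ContinuousLinearMap.id ℝ (EuclideanSpace ℝ (Fin N)) with hA
  -- bound on A applied to things
  have hAle : ∀ x : EuclideanSpace ℝ (Fin N), ‖A x‖ ≤ ε * ‖x‖ := fun x =>
    (A.le_opNorm x).trans (by gcongr)
  have hGx : ∀ x : EuclideanSpace ℝ (Fin N), G x = x + A x := by
    intro x; simp [hA]
  have hnormb : ∀ i, ‖b i‖ = 1 := fun i => hb.1 i
  -- norms
  have h1 : (1 : ℝ) = ‖v‖ ^ 2 + ⟪A v, v⟫ := by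
    rw [← hv2, hGx v, inner_add_left, real_inner_self_eq_norm_sq]
  have hAvv : |⟪A v, v⟫| ≤ ε * ‖v‖ ^ 2 := by
    calc |⟪A v, v⟫| ≤ ‖A v‖ * ‖v‖ := abs_real_inner_le_norm _ _
    _ ≤ ε * ‖v‖ * ‖v‖ := by gcongr; exact hAle v
    _ = ε * ‖v‖ ^ 2 := by ring
  have hlow : 1 ≤ (1 + ε) * ‖v‖ ^ 2 := by nlinarith [abs_le.1 hAvv]
  have hup : (1 - ε) * ‖v‖ ^ 2 ≤ 1 := by nlinarith [abs_le.1 hAvv]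
  -- orthonormal basis
  haveI : Nonempty (Fin N) := ⟨⟨0, by omega⟩⟩
  have card_eq : Fintype.card (Fin N) = Module.finrank ℝ (EuclideanSpace ℝ (Fin N)) := by simp
  set B : OrthonormalBasis (Fin N) ℝ (EuclideanSpace ℝ (Fin N)) :=
    (basisOfOrthonormalOfCardEqFinrank hb card_eq).toOrthonormalBasis
      (by rwa [coe_basisOfOrthonormalOfCardEqFinrank]) with hB
  have hBb : ∀ i, B i = b i := by
    intro i
    have := coe_basisOfOrthonormalOfCardEqFinrank hb card_eq
    simp [hB, Module.Basis.coe_toOrthonormalBasis, this]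
  have parseval : ∑ i, ⟪v, b i⟫ ^ 2 = ‖v‖ ^ 2 := by
    have h := B.sum_inner_mul_inner v v
    simp_rw [hBb, real_inner_comm (b _) v, ← sq, real_inner_self_eq_norm_sq] at h
    rw [← h]
    exact Finset.sum_congr rfl fun i _ => by rw [real_inner_comm]
  -- small coefficients
  have hsmall : ∀ i : Fin N, (i : ℕ) < N - 1 → ⟪v, b i⟫ ^ 2 ≤ ε ^ 2 * ‖v‖ ^ 2 := by
    intro i hi
    have h0 := hv1 i hi
    rw [hGx v, inner_add_left] at h0
    have : ⟪v, b i⟫ = -⟪A v, b i⟫ := by linarith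
    have habs : |⟪A v, b i⟫| ≤ ε * ‖v‖ := by
      calc |⟪A v, b i⟫| ≤ ‖A v‖ * ‖b i‖ := abs_real_inner_le_norm _ _
      _ ≤ ε * ‖v‖ := by rw [hnormb i, mul_one]; exact hAle v
    rw [this]
    nlinarith [abs_le.1 habs]
  set j : Fin N := ⟨N - 1, by omega⟩ with hj
  -- the last coefficient
  have hsum : ⟪v, b j⟫ ^ 2 = ‖v‖ ^ 2 - ∑ i ∈ Finset.univ.erase j, ⟪v, b i⟫ ^ 2 := by
    rw [← parseval, ← Finset.add_sum_erase _ _ (Finset.mem_univ j)]; ring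
  have hcard : (Finset.univ.erase j).card = N - 1 := by
    simp [Finset.card_erase_of_mem]
  have herase : ∑ i ∈ Finset.univ.erase j, ⟪v, b i⟫ ^ 2 ≤ ((N : ℝ) - 1) * (ε ^ 2 * ‖v‖ ^ 2) := by
    calc ∑ i ∈ Finset.univ.erase j, ⟪v, b i⟫ ^ 2
        ≤ ∑ i ∈ Finset.univ.erase j, ε ^ 2 * ‖v‖ ^ 2 := by
          apply Finset.sum_le_sum
          intro i hi
          apply hsmall
          have : i ≠ j := Finset.ne_of_mem_erase hi
          have : (i : ℕ) ≠ N - 1 := fun h => this (Fin.ext (by simp [hj, h]))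
          omega
      _ = ((N : ℝ) - 1) * (ε ^ 2 * ‖v‖ ^ 2) := by
          rw [Finset.sum_const, hcard, nsmul_eq_mul]
          congr 1
          have : (1:ℝ) ≤ (N:ℝ) := by exact_mod_cast Nat.one_le_of_lt hN
          push_cast [Nat.cast_sub (by omega : 1 ≤ N)]
          ring
  have hnonneg : (0:ℝ) ≤ ∑ i ∈ Finset.univ.erase j, ⟪v, b i⟫ ^ 2 :=
    Finset.sum_nonneg fun i _ => sq_nonneg _
  constructor
  · rcases le_or_gt (1 - ((N : ℝ) - 1) * ε ^ 2) 0 with h | h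
    · exact le_trans (div_nonpos_iff.2 (Or.inr ⟨h, by linarith⟩)) (sq_nonneg _)
    · rw [div_le_iff₀ (by linarith)]
      have hv2' : 1 / (1 + ε) ≤ ‖v‖ ^ 2 := by
        rw [div_le_iff₀ (by linarith)]; linarith [hlow]
      nlinarith [sq_nonneg (⟪v, b j⟫), norm_nonneg v]
  · have : ⟪v, b j⟫ ^ 2 ≤ ‖v‖ ^ 2 := by rw [hsum]; linarith
    rw [le_div_iff₀ (by linarith)]
    nlinarith
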